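/- arXiv:1704.01244 — 2 statements merged into one kernel-verified Lean document; each statement's English description precedes it below -/
import Mathlib

section
/- Assume α, β > 0, h ≥ 1, P_tx > 0, C > 0, A'_L ≥ A'_N > 0 and 0 < γ_L ≤ γ_N. For any initial ground distance r₀ > 0, drone speed v > 0 and transmission time τ > 0, set t_m = min(r₀/v, τ) and c = t_m/τ, and define the dynamic-repositioning average spectral efficiency Φ̄_mob(h, r₀) = c · (1/(v·t_m)) · ∫_{r₀ − v·t_m}^{r₀} Φ̄(h, r) dr + (1 − c) · Φ̄(h, 0). Then Φ̄_mob(h, r₀) ≥ Φ̄(h, r₀); that is, a drone that flies toward the user at speed v during the transmission achieves at least the average spectral efficiency of a drone hovering at ground distance r₀. -/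
/-- LoS probability: at ground distance `r > 0` the elevation angle in degrees is
`(180/π) · arctan (h/r)`; at `r = 0` the angle is 90 degrees. -/
noncomputable def PLoS (a b h r : ℝ) : ℝ :=
  if r = 0 then 1 / (1 + a * Real.exp (-b * (90 - a)))
  else 1 / (1 + a * Real.exp (-b * ((180 / Real.pi) * Real.arctan (h / r) - a)))

/-- LoS spectral efficiency. -/
noncomputable def PhiL (Ptx Cst AL gL h r : ℝ) : ℝ :=
  Real.logb 2 (1 + Ptx * AL * (h ^ 2 + r ^ 2) ^ (-(gL / 2)) / Cst)

/-- NLoS spectral efficiency. -/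
noncomputable def PhiN (Ptx Cst AN gN h r : ℝ) : ℝ :=
  Real.logb 2 (1 + Ptx * AN * (h ^ 2 + r ^ 2) ^ (-(gN / 2)) / Cst)

/-- Average spectral efficiency: LoS/NLoS mixture weighted by the LoS probability. -/
noncomputable def Phibar (a b Ptx Cst AL AN gL gN h r : ℝ) : ℝ :=
  PLoS a b h r * PhiL Ptx Cst AL gL h r + (1 - PLoS a b h r) * PhiN Ptx Cst AN gN h r

lemma PLoS_pos (a b h r : ℝ) (ha : 0 < a) : 0 < PLoS a b h r := by
  unfold PLoS; split <;> positivity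

lemma PLoS_le_one (a b h r : ℝ) (ha : 0 < a) : PLoS a b h r ≤ 1 := by
  unfold PLoS
  have e1 : (0:ℝ) < Real.exp (-b * (90 - a)) := Real.exp_pos _
  have e2 : (0:ℝ) < Real.exp (-b * ((180 / Real.pi) * Real.arctan (h / r) - a)) := Real.exp_pos _
  split <;>
  · rw [div_le_one (by nlinarith)]; nlinarith

lemma PLoS_mono_angle (a b : ℝ) (ha : 0 < a) (hb : 0 < b) {X Y : ℝ} (hXY : X ≤ Y) :
    1 / (1 + a * Real.exp (-b * (X - a))) ≤ 1 / (1 + a * Real.exp (-b * (Y - a))) := by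
  have e1 : (0:ℝ) < Real.exp (-b * (Y - a)) := Real.exp_pos _
  have hle : Real.exp (-b * (Y - a)) ≤ Real.exp (-b * (X - a)) :=
    Real.exp_le_exp.2 (by nlinarith)
  apply one_div_le_one_div_of_le (by nlinarith)
  nlinarith

lemma PLoS_anti (a b h : ℝ) (ha : 0 < a) (hb : 0 < b) (hh : 1 ≤ h)
    {r s : ℝ} (hr : 0 ≤ r) (hrs : r ≤ s) : PLoS a b h s ≤ PLoS a b h r := by
  rcases eq_or_lt_of_le hrs with rfl | hlt
  · exact le_refl _
  have hs : 0 < s := lt_of_le_of_lt hr hlt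
  have hpi : (0:ℝ) < Real.pi := Real.pi_pos
  have hh0 : (0:ℝ) < h := lt_of_lt_of_le one_pos hh
  rcases eq_or_lt_of_le hr with rfl | hr0
  · unfold PLoS
    rw [if_pos rfl, if_neg (ne_of_gt hs)]
    apply PLoS_mono_angle a b ha hb
    have harct : Real.arctan (h / s) ≤ Real.pi / 2 := (Real.arctan_lt_pi_div_two _).le
    calc (180 / Real.pi) * Real.arctan (h / s) ≤ (180 / Real.pi) * (Real.pi / 2) :=
          mul_le_mul_of_nonneg_left harct (by positivity)
      _ = 90 := by field_simp; norm_num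
  · unfold PLoS
    rw [if_neg (ne_of_gt hr0), if_neg (ne_of_gt hs)]
    apply PLoS_mono_angle a b ha hb
    apply mul_le_mul_of_nonneg_left _ (by positivity)
    apply Real.arctan_strictMono.monotone
    rw [div_le_div_iff₀ hs hr0]
    nlinarith

lemma base_ge_one (h r : ℝ) (hh : 1 ≤ h) : (1:ℝ) ≤ h ^ 2 + r ^ 2 := by nlinarith

lemma Phi_anti (Ptx Cst A g h : ℝ) (hPtx : 0 < Ptx) (hC : 0 < Cst) (hA : 0 < A)
    (hg : 0 < g) (hh : 1 ≤ h) {r s : ℝ} (hrs : r ^ 2 ≤ s ^ 2) :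
    Real.logb 2 (1 + Ptx * A * (h ^ 2 + s ^ 2) ^ (-(g / 2)) / Cst) ≤
      Real.logb 2 (1 + Ptx * A * (h ^ 2 + r ^ 2) ^ (-(g / 2)) / Cst) := by
  have hbr : (0:ℝ) < h ^ 2 + r ^ 2 := lt_of_lt_of_le one_pos (base_ge_one h r hh)
  have hbs : (0:ℝ) < h ^ 2 + s ^ 2 := lt_of_lt_of_le one_pos (base_ge_one h s hh)
  have hrpow : (h ^ 2 + s ^ 2) ^ (-(g / 2)) ≤ (h ^ 2 + r ^ 2) ^ (-(g / 2)) :=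
    Real.rpow_le_rpow_of_nonpos hbr (by linarith) (by linarith)
  have hpos : (0:ℝ) < (h ^ 2 + s ^ 2) ^ (-(g / 2)) := Real.rpow_pos_of_pos hbs _
  apply Real.logb_le_logb_of_le one_lt_two (by positivity)
  gcongr

lemma Phi_nonneg (Ptx Cst A g h r : ℝ) (hPtx : 0 < Ptx) (hC : 0 < Cst) (hA : 0 < A)
    (hh : 1 ≤ h) :
    0 ≤ Real.logb 2 (1 + Ptx * A * (h ^ 2 + r ^ 2) ^ (-(g / 2)) / Cst) := by
  have hbr : (0:ℝ) < h ^ 2 + r ^ 2 := lt_of_lt_of_le one_pos (base_ge_one h r hh)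
  have : (0:ℝ) < (h ^ 2 + r ^ 2) ^ (-(g / 2)) := Real.rpow_pos_of_pos hbr _
  apply Real.logb_nonneg one_lt_two
  have hq : (0:ℝ) < Ptx * A * (h ^ 2 + r ^ 2) ^ (-(g / 2)) / Cst := by positivity
  linarith

lemma PhiN_le_PhiL (Ptx Cst AL AN gL gN h r : ℝ) (hPtx : 0 < Ptx) (hC : 0 < Cst)
    (hAN : 0 < AN) (hALN : AN ≤ AL) (hgL : 0 < gL) (hgLN : gL ≤ gN) (hh : 1 ≤ h) :
    PhiN Ptx Cst AN gN h r ≤ PhiL Ptx Cst AL gL h r := by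
  have hAL : 0 < AL := lt_of_lt_of_le hAN hALN
  have hb1 : (1:ℝ) ≤ h ^ 2 + r ^ 2 := base_ge_one h r hh
  have hbr : (0:ℝ) < h ^ 2 + r ^ 2 := lt_of_lt_of_le one_pos hb1
  have hrpow : (h ^ 2 + r ^ 2) ^ (-(gN / 2)) ≤ (h ^ 2 + r ^ 2) ^ (-(gL / 2)) :=
    Real.rpow_le_rpow_of_exponent_le hb1 (by linarith)
  have hpos : (0:ℝ) < (h ^ 2 + r ^ 2) ^ (-(gN / 2)) := Real.rpow_pos_of_pos hbr _
  unfold PhiN PhiL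
  apply Real.logb_le_logb_of_le one_lt_two (by positivity)
  gcongr <;> first | positivity | assumption

lemma Phibar_anti (a b Ptx Cst AL AN gL gN h : ℝ)
    (ha : 0 < a) (hb : 0 < b) (hh : 1 ≤ h) (hPtx : 0 < Ptx) (hC : 0 < Cst)
    (hAN : 0 < AN) (hALN : AN ≤ AL) (hgL : 0 < gL) (hgLN : gL ≤ gN)
    {r s : ℝ} (hr : 0 ≤ r) (hrs : r ≤ s) :
    Phibar a b Ptx Cst AL AN gL gN h s ≤ Phibar a b Ptx Cst AL AN gL gN h r := by
  have hAL : 0 < AL := lt_of_lt_of_le hAN hALN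
  have hgN : 0 < gN := lt_of_lt_of_le hgL hgLN
  have hsq : r ^ 2 ≤ s ^ 2 := by nlinarith
  have hq := PLoS_pos a b h s ha
  have hp1 := PLoS_le_one a b h r ha
  have hpq := PLoS_anti a b h ha hb hh hr hrs
  have hL : PhiL Ptx Cst AL gL h s ≤ PhiL Ptx Cst AL gL h r :=
    Phi_anti Ptx Cst AL gL h hPtx hC hAL hgL hh hsq
  have hN : PhiN Ptx Cst AN gN h s ≤ PhiN Ptx Cst AN gN h r :=
    Phi_anti Ptx Cst AN gN h hPtx hC hAN hgN hh hsq
  have hNL : PhiN Ptx Cst AN gN h r ≤ PhiL Ptx Cst AL gL h r :=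
    PhiN_le_PhiL Ptx Cst AL AN gL gN h r hPtx hC hAN hALN hgL hgLN hh
  unfold Phibar
  set p := PLoS a b h r
  set q := PLoS a b h s
  nlinarith [mul_le_mul_of_nonneg_left hL hq.le,
    mul_le_mul_of_nonneg_left hN (by linarith : (0:ℝ) ≤ 1 - q),
    mul_nonneg (by linarith : (0:ℝ) ≤ p - q) (by linarith : (0:ℝ) ≤ PhiL Ptx Cst AL gL h r - PhiN Ptx Cst AN gN h r)]

open intervalIntegral in
/-- A drone that flies toward the user at speed `v` for time `t_m = min(r₀/v, τ)` and then
hovers above the user achieves a time-averaged spectral efficiency at least that of a drone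
hovering at ground distance `r₀`. -/
theorem mob_se_ge_hover_se (a b Ptx Cst AL AN gL gN h r₀ v τ : ℝ)
    (ha : 0 < a) (hb : 0 < b) (hh : 1 ≤ h) (hPtx : 0 < Ptx) (hC : 0 < Cst)
    (hAN : 0 < AN) (hALN : AN ≤ AL) (hgL : 0 < gL) (hgLN : gL ≤ gN)
    (hr₀ : 0 < r₀) (hv : 0 < v) (hτ : 0 < τ)
    (tm c : ℝ) (htm : tm = min (r₀ / v) τ) (hc : c = tm / τ) :
    c * ((1 / (v * tm)) *
          ∫ x in (r₀ - v * tm)..r₀, Phibar a b Ptx Cst AL AN gL gN h x) +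
        (1 - c) * Phibar a b Ptx Cst AL AN gL gN h 0 ≥
      Phibar a b Ptx Cst AL AN gL gN h r₀ := by
  have htm0 : 0 < tm := by
    rw [htm]; exact lt_min (div_pos hr₀ hv) hτ
  have htmτ : tm ≤ τ := by rw [htm]; exact min_le_right _ _
  have hvtm : 0 < v * tm := mul_pos hv htm0
  have hvtmr : v * tm ≤ r₀ := by
    have h1 : tm ≤ r₀ / v := by rw [htm]; exact min_le_left _ _
    calc v * tm ≤ v * (r₀ / v) := by nlinarith
      _ = r₀ := by field_simp
  set L := r₀ - v * tm with hL
  have hL0 : 0 ≤ L := by simp [hL]; linarith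
  have hLr : L ≤ r₀ := by simp [hL]; nlinarith
  set Φ := fun x => Phibar a b Ptx Cst AL AN gL gN h x with hΦ
  have hanti : AntitoneOn Φ (Set.uIcc L r₀) := by
    intro x hx y hy hxy
    rw [Set.uIcc_of_le hLr] at hx
    exact Phibar_anti a b Ptx Cst AL AN gL gN h ha hb hh hPtx hC hAN hALN hgL hgLN
      (le_trans hL0 hx.1) hxy
  have hint : IntervalIntegrable Φ MeasureTheory.volume L r₀ := hanti.intervalIntegrable
  have hconst : IntervalIntegrable (fun _ => Φ r₀) MeasureTheory.volume L r₀ :=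
    intervalIntegrable_const
  have hI : (r₀ - L) * Φ r₀ ≤ ∫ x in L..r₀, Φ x := by
    have := intervalIntegral.integral_mono_on hLr hconst hint
      (fun x hx => Phibar_anti a b Ptx Cst AL AN gL gN h ha hb hh hPtx hC hAN hALN hgL hgLN
        (le_trans hL0 hx.1) hx.2)
    simpa [intervalIntegral.integral_const, smul_eq_mul] using this
  have hc0 : 0 < c := by rw [hc]; positivity
  have hc1 : c ≤ 1 := by rw [hc]; exact div_le_one_of_le₀ htmτ hτ.le
  have hΦ0 : Φ r₀ ≤ Φ 0 :=
    Phibar_anti a b Ptx Cst AL AN gL gN h ha hb hh hPtx hC hAN hALN hgL hgLN le_rfl hr₀.le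
  have hA : Φ r₀ ≤ (1 / (v * tm)) * ∫ x in L..r₀, Φ x := by
    rw [one_div, inv_mul_eq_div, le_div_iff₀ hvtm]
    have heq : r₀ - L = v * tm := by simp [hL]
    rw [heq] at hI
    linarith
  have key : Φ r₀ ≤ c * ((1 / (v * tm)) * ∫ x in L..r₀, Φ x) + (1 - c) * Φ 0 := by
    nlinarith [mul_le_mul_of_nonneg_left hA hc0.le,
      mul_le_mul_of_nonneg_left hΦ0 (by linarith : (0:ℝ) ≤ 1 - c)]
  exact key
end

section
/- (Rigorous form of Theorem 1.) Assume α, β > 0, h ≥ 1, P_tx > 0, C > 0, A'_L ≥ A'_N > 0, 0 < γ_L ≤ γ_N, R > 0, v > 0 and τ > 0. Let Φ̄_hov(h) = ∫₀^R Φ̄(h, r) · (2r/R²) dr be the disk-averaged spectral efficiency of the hovering drone and Φ̄_mob(h) = ∫₀^R Φ̄_mob(h, r) · (2r/R²) dr that of the dynamically repositioning drone. Then Φ̄_hov(h) > 0 and the improvement ratio of dynamic repositioning over hovering is bounded above by the ratio of the zero-distance LoS spectral efficiency to the cell-edge NLoS spectral efficiency: Φ̄_mob(h) / Φ̄_hov(h)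 ≤ log₂(1 + P_tx · A'_L · h^(−γ_L) / C) / log₂(1 + P_tx · A'_N · (h² + R²)^(−γ_N/2) / C). -/
/-- Time-averaged spectral efficiency of the dynamically repositioning drone:
it flies toward the user at speed `v` for time `t_m = min (r/v) τ` and hovers
above the user for the remaining time. -/
noncomputable def Phimob (a b Ptx Cst AL AN gL gN h v τ r : ℝ) : ℝ :=
  if r = 0 then Phibar a b Ptx Cst AL AN gL gN h 0
  else
    (min (r / v) τ / τ) *
        ((1 / (v * min (r / v) τ)) *
          ∫ x in (r - v * min (r / v) τ)..r, Phibar a b Ptx Cst AL AN gL gN h x) +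
      (1 - min (r / v) τ / τ) * Phibar a b Ptx Cst AL AN gL gN h 0

lemma PLoS_mem {a b h : ℝ} (r : ℝ) (ha : 0 < a) :
    0 ≤ PLoS a b h r ∧ PLoS a b h r ≤ 1 := by
  unfold PLoS
  split
  · refine ⟨by positivity, ?_⟩
    rw [div_le_one (by positivity)]
    nlinarith [Real.exp_pos (-b * (90 - a))]
  · refine ⟨by positivity, ?_⟩
    rw [div_le_one (by positivity)]
    nlinarith [Real.exp_pos (-b * ((180 / Real.pi) * Real.arctan (h / r) - a))]

lemma PLoS_measurable (a b h : ℝ) : Measurable (PLoS a b h) := by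
  unfold PLoS
  refine Measurable.ite (measurableSet_eq) measurable_const ?_
  have h1 : Measurable fun r : ℝ => h / r := measurable_const.div measurable_id
  measurability

lemma PhiGen_cont {P A g h Cst : ℝ} (hh : 0 < h) (hP : 0 < P) (hA : 0 < A) (hC : 0 < Cst) :
    Continuous fun r : ℝ => Real.logb 2 (1 + P * A * (h ^ 2 + r ^ 2) ^ (-(g / 2)) / Cst) := by
  have hbase : Continuous fun r : ℝ => (h ^ 2 + r ^ 2 : ℝ) := by continuity
  have hr : Continuous fun r : ℝ => ((h ^ 2 + r ^ 2 : ℝ)) ^ (-(g / 2)) := by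
    rw [continuous_iff_continuousAt]; intro x
    have hb0 : (h ^ 2 + x ^ 2 : ℝ) ≠ 0 := by positivity
    exact hbase.continuousAt.rpow_const (Or.inl hb0)
  have hinner : Continuous fun r : ℝ => 1 + P * A * (h ^ 2 + r ^ 2) ^ (-(g / 2)) / Cst :=
    continuous_const.add ((continuous_const.mul hr).div_const Cst)
  rw [continuous_iff_continuousAt]; intro x
  have hpos : (0:ℝ) < 1 + P * A * (h ^ 2 + x ^ 2) ^ (-(g / 2)) / Cst := by positivity
  unfold Real.logb
  exact (hinner.continuousAt.log (ne_of_gt hpos)).div_const _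

lemma Phibar_measurable (a b Ptx Cst AL AN gL gN h : ℝ) (hh : 0 < h) (hPtx : 0 < Ptx)
    (hC : 0 < Cst) (hAL : 0 < AL) (hAN : 0 < AN) :
    Measurable (Phibar a b Ptx Cst AL AN gL gN h) := by
  have hP := PLoS_measurable a b h
  have hL : Measurable (PhiL Ptx Cst AL gL h) := (PhiGen_cont hh hPtx hAL hC).measurable
  have hN : Measurable (PhiN Ptx Cst AN gN h) := (PhiGen_cont hh hPtx hAN hC).measurable
  unfold Phibar
  exact (hP.mul hL).add ((measurable_const.sub hP).mul hN)

lemma Phibar_bounds (a b Ptx Cst AL AN gL gN h R r : ℝ)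
    (ha : 0 < a) (hh : 1 ≤ h) (hPtx : 0 < Ptx) (hC : 0 < Cst)
    (hAN : 0 < AN) (hALN : AN ≤ AL) (hgL : 0 < gL) (hgLN : gL ≤ gN)
    (hr0 : 0 ≤ r) (hrR : r ≤ R) :
    Real.logb 2 (1 + Ptx * AN * (h ^ 2 + R ^ 2) ^ (-(gN / 2)) / Cst) ≤
      Phibar a b Ptx Cst AL AN gL gN h r ∧
    Phibar a b Ptx Cst AL AN gL gN h r ≤
      Real.logb 2 (1 + Ptx * AL * h ^ (-gL) / Cst) := by
  have hh0 : (0:ℝ) < h := lt_of_lt_of_le one_pos hh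
  have hAL : (0:ℝ) < AL := lt_of_lt_of_le hAN hALN
  have hs1 : (1:ℝ) ≤ h ^ 2 + r ^ 2 := by nlinarith
  have hs0 : (0:ℝ) < h ^ 2 + r ^ 2 := by nlinarith
  have hsR : h ^ 2 + r ^ 2 ≤ h ^ 2 + R ^ 2 := by nlinarith
  have e1 : (h ^ 2 + R ^ 2) ^ (-(gN / 2)) ≤ (h ^ 2 + r ^ 2) ^ (-(gN / 2)) :=
    Real.rpow_le_rpow_of_nonpos hs0 hsR (by linarith)
  have e2 : (h ^ 2 + r ^ 2) ^ (-(gN / 2)) ≤ (h ^ 2 + r ^ 2) ^ (-(gL / 2)) :=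
    Real.rpow_le_rpow_of_exponent_le hs1 (by linarith)
  have e3 : (h ^ 2 + r ^ 2) ^ (-(gL / 2)) ≤ h ^ (-gL) := by
    have key : ((h : ℝ) ^ 2) ^ (-(gL / 2)) = h ^ (-gL) := by
      rw [← Real.rpow_natCast h 2, ← Real.rpow_mul hh0.le]
      norm_num
      congr 1
      ring
    calc (h ^ 2 + r ^ 2) ^ (-(gL / 2)) ≤ ((h:ℝ) ^ 2) ^ (-(gL / 2)) :=
          Real.rpow_le_rpow_of_nonpos (by positivity) (by nlinarith) (by linarith)
      _ = h ^ (-gL) := key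
  have rpos2 : (0:ℝ) < (h ^ 2 + r ^ 2) ^ (-(gN / 2)) := Real.rpow_pos_of_pos hs0 _
  have rpos3 : (0:ℝ) < (h ^ 2 + r ^ 2) ^ (-(gL / 2)) := Real.rpow_pos_of_pos hs0 _
  have hNlo : Real.logb 2 (1 + Ptx * AN * (h ^ 2 + R ^ 2) ^ (-(gN / 2)) / Cst) ≤
      PhiN Ptx Cst AN gN h r := by
    unfold PhiN
    apply Real.logb_le_logb_of_le one_lt_two (by positivity)
    gcongr
  have hNL : PhiN Ptx Cst AN gN h r ≤ PhiL Ptx Cst AL gL h r := by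
    unfold PhiN PhiL
    apply Real.logb_le_logb_of_le one_lt_two (by positivity)
    gcongr
  have hLhi : PhiL Ptx Cst AL gL h r ≤ Real.logb 2 (1 + Ptx * AL * h ^ (-gL) / Cst) := by
    unfold PhiL
    apply Real.logb_le_logb_of_le one_lt_two (by positivity)
    gcongr
  obtain ⟨hp0, hp1⟩ := PLoS_mem (a := a) (b := b) (h := h) r ha
  unfold Phibar
  constructor
  · nlinarith
  · nlinarith

/-- Rigorous form of Theorem 1: the disk-averaged spectral efficiency of the hovering
drone is positive, and the improvement ratio of dynamic repositioning over hovering is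
bounded above by the ratio of the zero-distance LoS spectral efficiency to the
cell-edge NLoS spectral efficiency. -/
theorem se_improvement_ratio_upper_bound (a b Ptx Cst AL AN gL gN h R v τ : ℝ)
    (ha : 0 < a) (hb : 0 < b) (hh : 1 ≤ h) (hPtx : 0 < Ptx) (hC : 0 < Cst)
    (hAN : 0 < AN) (hALN : AN ≤ AL) (hgL : 0 < gL) (hgLN : gL ≤ gN)
    (hR : 0 < R) (hv : 0 < v) (hτ : 0 < τ) :
    0 < (∫ r in (0:ℝ)..R, Phibar a b Ptx Cst AL AN gL gN h r * (2 * r / R ^ 2)) ∧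
    (∫ r in (0:ℝ)..R, Phimob a b Ptx Cst AL AN gL gN h v τ r * (2 * r / R ^ 2)) /
        (∫ r in (0:ℝ)..R, Phibar a b Ptx Cst AL AN gL gN h r * (2 * r / R ^ 2)) ≤
      Real.logb 2 (1 + Ptx * AL * h ^ (-gL) / Cst) /
        Real.logb 2 (1 + Ptx * AN * (h ^ 2 + R ^ 2) ^ (-(gN / 2)) / Cst) := by
  have hh0 : (0:ℝ) < h := lt_of_lt_of_le one_pos hh
  have hAL : (0:ℝ) < AL := lt_of_lt_of_le hAN hALN
  set M : ℝ := Real.logb 2 (1 + Ptx * AL * h ^ (-gL) / Cst) with hMdef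
  set m : ℝ := Real.logb 2 (1 + Ptx * AN * (h ^ 2 + R ^ 2) ^ (-(gN / 2)) / Cst) with hmdef
  have hbnd : ∀ r : ℝ, 0 ≤ r → r ≤ R →
      m ≤ Phibar a b Ptx Cst AL AN gL gN h r ∧ Phibar a b Ptx Cst AL AN gL gN h r ≤ M :=
    fun r h1 h2 => Phibar_bounds a b Ptx Cst AL AN gL gN h R r ha hh hPtx hC hAN hALN hgL hgLN h1 h2
  have hm : 0 < m := by
    apply Real.logb_pos one_lt_two
    have : (0:ℝ) < Ptx * AN * (h ^ 2 + R ^ 2) ^ (-(gN / 2)) / Cst := by positivity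
    linarith
  have hM : 0 < M := by
    apply Real.logb_pos one_lt_two
    have h1 : (0:ℝ) < Ptx * AL * h ^ (-gL) / Cst := by positivity
    linarith
  have hmeas := Phibar_measurable a b Ptx Cst AL AN gL gN h hh0 hPtx hC hAL hAN
  -- interval integrability of Phibar on subintervals of [0, R]
  have hFint : ∀ c d : ℝ, 0 ≤ c → d ≤ R → c ≤ d →
      IntervalIntegrable (Phibar a b Ptx Cst AL AN gL gN h) MeasureTheory.volume c d := by
    intro c d hc hd hcd
    refine (intervalIntegrable_const (c := M)).mono_fun' hmeas.aestronglyMeasurable ?_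
    filter_upwards [MeasureTheory.ae_restrict_mem measurableSet_uIoc] with x hx
    rw [Set.uIoc_of_le hcd] at hx
    obtain ⟨hbl, hbu⟩ := hbnd x (le_trans hc hx.1.le) (hx.2.trans hd)
    rw [Real.norm_eq_abs, abs_le]
    exact ⟨by linarith, hbu⟩
  -- integrability of the hovering integrand
  have hwmeas : Measurable fun r : ℝ => 2 * r / R ^ 2 :=
    (measurable_const.mul measurable_id).div_const _
  have hIhov : IntervalIntegrable
      (fun r => Phibar a b Ptx Cst AL AN gL gN h r * (2 * r / R ^ 2))
      MeasureTheory.volume 0 R := by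
    refine (intervalIntegrable_const (c := M * (2 * R / R ^ 2))).mono_fun'
      ((hmeas.mul hwmeas).aestronglyMeasurable) ?_
    filter_upwards [MeasureTheory.ae_restrict_mem measurableSet_uIoc] with x hx
    rw [Set.uIoc_of_le hR.le] at hx
    obtain ⟨hbl, hbu⟩ := hbnd x hx.1.le hx.2
    have hw0 : 0 ≤ 2 * x / R ^ 2 := div_nonneg (by linarith [hx.1]) (by positivity)
    rw [Real.norm_eq_abs, abs_mul, abs_of_nonneg hw0]
    have habs : |Phibar a b Ptx Cst AL AN gL gN h x| ≤ M := by
      rw [abs_le]; exact ⟨by linarith, hbu⟩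
    calc |Phibar a b Ptx Cst AL AN gL gN h x| * (2 * x / R ^ 2)
        ≤ M * (2 * x / R ^ 2) := by gcongr
      _ ≤ M * (2 * R / R ^ 2) := by gcongr
                                    exact hx.2
  -- weight integral computations
  have hwint : ∀ c : ℝ, (∫ r in (0:ℝ)..R, c * (2 * r / R ^ 2)) = c := by
    intro c
    have : (fun r : ℝ => c * (2 * r / R ^ 2)) = fun r : ℝ => (2 * c / R ^ 2) * r := by
      funext r; field_simp
    rw [this, intervalIntegral.integral_const_mul, integral_id]
    field_simp
    ring
  have hwcont : ∀ c : ℝ, IntervalIntegrable (fun r : ℝ => c * (2 * r / R ^ 2))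
      MeasureTheory.volume 0 R := by
    intro c
    exact (Continuous.intervalIntegrable (by continuity) 0 R)
  -- lower bound for hovering integral
  have hlow : m ≤ ∫ r in (0:ℝ)..R, Phibar a b Ptx Cst AL AN gL gN h r * (2 * r / R ^ 2) := by
    have := intervalIntegral.integral_mono_on hR.le (hwcont m) hIhov
      (fun x hx => by
        have hw0 : 0 ≤ 2 * x / R ^ 2 := by
          have := hx.1; positivity
        exact mul_le_mul_of_nonneg_right (hbnd x hx.1 hx.2).1 hw0)
    rwa [hwint m] at this
  have hpos : 0 < ∫ r in (0:ℝ)..R, Phibar a b Ptx Cst AL AN gL gN h r * (2 * r / R ^ 2) :=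
    lt_of_lt_of_le hm hlow
  -- pointwise bound for Phimob
  have hmobptw : ∀ r : ℝ, 0 ≤ r → r ≤ R → Phimob a b Ptx Cst AL AN gL gN h v τ r ≤ M := by
    intro r hr0 hrR
    unfold Phimob
    split
    · exact (hbnd 0 le_rfl hR.le).2
    · rename_i hrne
      have hrpos : 0 < r := lt_of_le_of_ne hr0 (Ne.symm hrne)
      set t := min (r / v) τ with htdef
      have ht0 : 0 < t := lt_min (by positivity) hτ
      have htτ : t ≤ τ := min_le_right _ _
      have hvt : v * t ≤ r := by
        have h1 : t ≤ r / v := min_le_left _ _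
        calc v * t ≤ v * (r / v) := by nlinarith
          _ = r := by field_simp
      have hlo : 0 ≤ r - v * t := by linarith
      have hvt0 : 0 < v * t := by positivity
      have hInt : IntervalIntegrable (Phibar a b Ptx Cst AL AN gL gN h)
          MeasureTheory.volume (r - v * t) r := hFint _ _ hlo hrR (by nlinarith)
      have hIub : (∫ x in (r - v * t)..r, Phibar a b Ptx Cst AL AN gL gN h x) ≤ v * t * M := by
        have hmono := intervalIntegral.integral_mono_on (by nlinarith : r - v * t ≤ r) hInt
          (intervalIntegrable_const (c := M))
          (fun x hx => (hbnd x (le_trans hlo hx.1) (hx.2.trans hrR)).2)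
        rw [intervalIntegral.integral_const, smul_eq_mul] at hmono
        have heq : (r - (r - v * t)) * M = v * t * M := by ring
        linarith
      have h1 : (1 / (v * t)) * (∫ x in (r - v * t)..r, Phibar a b Ptx Cst AL AN gL gN h x) ≤ M := by
        have hstep := mul_le_mul_of_nonneg_left hIub
          (le_of_lt (by positivity : (0:ℝ) < 1 / (v * t)))
        calc (1 / (v * t)) * (∫ x in (r - v * t)..r, Phibar a b Ptx Cst AL AN gL gN h x)
            ≤ (1 / (v * t)) * (v * t * M) := hstep
          _ = M := by field_simp
      have h0M : Phibar a b Ptx Cst AL AN gL gN h 0 ≤ M := (hbnd 0 le_rfl hR.le).2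
      have htτ0 : 0 ≤ t / τ := by positivity
      have htτ1 : t / τ ≤ 1 := by rw [div_le_one hτ]; exact htτ
      have step1 := mul_le_mul_of_nonneg_left h1 htτ0
      have step2 : (1 - t / τ) * Phibar a b Ptx Cst AL AN gL gN h 0 ≤ (1 - t / τ) * M :=
        mul_le_mul_of_nonneg_left h0M (by linarith)
      linarith
  -- upper bound for mobility integral
  have hmob_le : (∫ r in (0:ℝ)..R, Phimob a b Ptx Cst AL AN gL gN h v τ r * (2 * r / R ^ 2)) ≤ M := by
    by_cases hI : IntervalIntegrable
        (fun r => Phimob a b Ptx Cst AL AN gL gN h v τ r * (2 * r / R ^ 2))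
        MeasureTheory.volume 0 R
    · have := intervalIntegral.integral_mono_on hR.le hI (hwcont M)
        (fun x hx => by
          have hw0 : 0 ≤ 2 * x / R ^ 2 := div_nonneg (by linarith [hx.1]) (by positivity)
          exact mul_le_mul_of_nonneg_right (hmobptw x hx.1 hx.2) hw0)
      rwa [hwint M] at this
    · rw [intervalIntegral.integral_undef hI]
      exact hM.le
  refine ⟨hpos, ?_⟩
  rw [div_le_div_iff₀ hpos hm]
  have g1 := mul_le_mul_of_nonneg_right hmob_le hm.le
  have g2 := mul_le_mul_of_nonneg_left hlow hM.le
  linarith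
end
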